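/- Let X be a locally path connected and simply connected topological space. Then the map φ : Π₁(X) → X × X, [γ] ↦ (γ(1), γ(0)), is a homeomorphism (where Π₁(X) carries the CO' topology); moreover φ sends composition to pair-groupoid composition, i.e. for paths α, β with α(0) = β(1) one has φ([α ⧠ β]) = (α(1), β(0)). -/

import Mathlib

open unitInterval

noncomputable section

variable {X : Type*} [TopologicalSpace X]

/-- The path-homotopy (homotopy relative to `{0,1}`) relation on `C(I, X)`. -/
def pRel (f g : C(I, X)) : Prop := f.HomotopicRel g {0, 1}

/-- The path-homotopy setoid on `C(I, X)`. -/
def pSetoid (X : Type*) [TopologicalSpace X] : Setoid C(I, X) :=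
  ⟨pRel, ContinuousMap.HomotopicRel.equivalence⟩

/-- The fundamental groupoid `Π₁(X)` as the quotient of the path space `P(X) = C(I, X)`
(with the compact-open topology) by path homotopy; it carries the quotient (CO') topology. -/
abbrev Pi1 (X : Type*) [TopologicalSpace X] := Quotient (pSetoid X)

/-- The quotient map `q : P(X) → Π₁(X)`. -/
def pq : C(I, X) → Pi1 X := Quotient.mk (pSetoid X)

theorem pRel.endpts {f g : C(I, X)} (h : pRel f g) {t : I} (ht : t ∈ ({0, 1} : Set I)) :
    f t = g t := h.some.fst_eq_snd ht

/-- The source map `s : Π₁(X) → X`, `[γ] ↦ γ(0)`. -/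
def srcMap : Pi1 X → X :=
  Quotient.lift (fun f : C(I, X) => f 0) fun _ _ h =>
    pRel.endpts h (by simp)

/-- The range map `r : Π₁(X) → X`, `[γ] ↦ γ(1)`. -/
def rngMap : Pi1 X → X :=
  Quotient.lift (fun f : C(I, X) => f 1) fun _ _ h =>
    pRel.endpts h (by simp)

/-- A continuous map `I → X` regarded as a `Path` between its endpoints. -/
def toPath (f : C(I, X)) : Path (f 0) (f 1) := ⟨f, rfl, rfl⟩

/-- Concatenation `α ⧠ β` of paths: traverse `β` first and then `α`
(given `β 1 = α 0`). -/
def concat (α β : C(I, X)) (h : β 1 = α 0) : C(I, X) :=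
  ((toPath β).trans ((toPath α).cast h rfl)).toContinuousMap

@[simp] theorem concat_zero (α β : C(I, X)) (h : β 1 = α 0) : concat α β h 0 = β 0 :=
  ((toPath β).trans ((toPath α).cast h rfl)).source

@[simp] theorem concat_one (α β : C(I, X)) (h : β 1 = α 0) : concat α β h 1 = α 1 :=
  ((toPath β).trans ((toPath α).cast h rfl)).target

/-- The set `N([γ], U, V) = {[δ ⧠ γ ⧠ θ] : δ a path in U with δ 0 = γ 1,
θ a path in V with θ 1 = γ 0}` in `Π₁(X)`. -/
def Nhd (a : Pi1 X) (U V : Set X) : Set (Pi1 X) :=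
  { b | ∃ (γ δ θ : C(I, X)) (h₁ : θ 1 = γ 0) (h₂ : γ 1 = δ 0),
      pq γ = a ∧ Set.range δ ⊆ U ∧ Set.range θ ⊆ V ∧
      b = pq (concat δ (concat γ θ h₁) ((concat_one γ θ h₁).trans h₂)) }

/-- A subset `U ⊆ X` is relatively inessential in `X` if every loop in `U` is
null-homotopic (path-homotopic to a constant path) in `X`. -/
def RelInessential (X : Type*) [TopologicalSpace X] (U : Set X) : Prop :=
  ∀ γ : C(I, X), Set.range γ ⊆ U → γ 1 = γ 0 →
    pRel γ (ContinuousMap.const I (γ 0))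

/-- `X` is semilocally simply connected if every point has a relatively inessential
open neighbourhood. -/
def SemilocSimplyConnected (X : Type*) [TopologicalSpace X] : Prop :=
  ∀ x : X, ∃ U : Set X, IsOpen U ∧ x ∈ U ∧ RelInessential X U


theorem concat_apply (α β : C(I, X)) (h : β 1 = α 0) (t : I) :
    concat α β h t =
      if ht : (t : ℝ) ≤ 1 / 2 then β ⟨2 * t, (mul_pos_mem_iff zero_lt_two).2 ⟨t.2.1, ht⟩⟩
      else α ⟨2 * t - 1, two_mul_sub_one_mem_iff.2 ⟨(not_le.1 ht).le, t.2.2⟩⟩ := by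
  show ((toPath β).trans ((toPath α).cast h rfl)) t = _
  rw [Path.trans_apply]
  split_ifs with ht <;> rfl

theorem concat_lower (α γ θ : C(I, X)) (h₁ : θ 1 = γ 0) (h₂ : concat γ θ h₁ 1 = α 0) (t : I)
    (ht : (t : ℝ) ≤ 1 / 4) : concat α (concat γ θ h₁) h₂ t ∈ Set.range θ := by
  have h2 : (t : ℝ) ≤ 1 / 2 := by linarith
  rw [concat_apply, dif_pos h2, concat_apply]
  split_ifs with h3
  · exact Set.mem_range_self _
  · exact absurd (show (2 : ℝ) * t ≤ 1 / 2 by linarith) h3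

theorem concat_upper (α β : C(I, X)) (h : β 1 = α 0) (t : I)
    (ht : 1 / 2 ≤ (t : ℝ)) : concat α β h t ∈ Set.range α := by
  rw [concat_apply]
  split_ifs with h2
  · refine ⟨0, ?_⟩
    rw [← h]
    congr 1
    exact Subtype.ext (show ((1:I) : ℝ) = 2 * t by rw [Set.Icc.coe_one]; linarith)
  · exact Set.mem_range_self _

theorem concat_middle (α γ θ : C(I, X)) (h₁ : θ 1 = γ 0) (h₂ : concat γ θ h₁ 1 = α 0) (t : I)
    (ha : 1 / 4 ≤ (t : ℝ)) (hb : (t : ℝ) ≤ 1 / 2) (u : I) (hu : (u : ℝ) = 4 * t - 1) :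
    concat α (concat γ θ h₁) h₂ t = γ u := by
  rw [concat_apply, dif_pos hb, concat_apply]
  split_ifs with h3
  · have h3' : (2 : ℝ) * t ≤ 1 / 2 := h3
    have ht4 : (t : ℝ) = 1 / 4 := by linarith
    refine (congrArg θ (Subtype.ext (show (2 : ℝ) * (2 * t) = ((1 : I) : ℝ) by
      rw [Set.Icc.coe_one]; linarith))).trans ?_
    rw [h₁]
    exact congrArg γ (Subtype.ext (show ((0 : I) : ℝ) = (u : ℝ) by
      rw [Set.Icc.coe_zero, hu]; linarith))
  · exact congrArg γ (Subtype.ext (show (2 : ℝ) * (2 * t) - 1 = (u : ℝ) by rw [hu]; ring))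

theorem paths_homotopic (hsc : ∀ γ : C(I, X), γ 1 = γ 0 → pRel γ (ContinuousMap.const I (γ 0)))
    {x y : X} (p q : Path x y) : p.Homotopic q := by
  have h1 : pRel (p.trans q.symm).toContinuousMap
      (ContinuousMap.const I ((p.trans q.symm).toContinuousMap 0)) := by
    apply hsc
    simp
  have h2 : (p.trans q.symm).Homotopic (Path.refl x) := by
    obtain ⟨H⟩ := h1
    exact ⟨H.cast rfl (by ext t; simp)⟩
  have c1 : p.Homotopic (p.trans (Path.refl y)) := Path.Homotopic.symm ⟨Path.Homotopy.transRefl p⟩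
  have c2 : (Path.refl y).Homotopic (q.symm.trans q) := ⟨Path.Homotopy.reflSymmTrans q⟩
  have c3 : (p.trans (Path.refl y)).Homotopic (p.trans (q.symm.trans q)) :=
    Path.Homotopic.hcomp (Path.Homotopic.refl p) c2
  have c4 : ((p.trans q.symm).trans q).Homotopic (p.trans (q.symm.trans q)) :=
    ⟨Path.Homotopy.transAssoc p q.symm q⟩
  have c5 : ((p.trans q.symm).trans q).Homotopic ((Path.refl x).trans q) :=
    Path.Homotopic.hcomp h2 (Path.Homotopic.refl q)
  have c6 : ((Path.refl x).trans q).Homotopic q := ⟨Path.Homotopy.reflTrans q⟩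
  exact c1.trans (c3.trans ((c4.symm.trans c5).trans c6))

theorem pq_eq_of_endpoints (hsc : ∀ γ : C(I, X), γ 1 = γ 0 → pRel γ (ContinuousMap.const I (γ 0)))
    {f g : C(I, X)} (h0 : f 0 = g 0) (h1 : f 1 = g 1) : pq f = pq g := by
  apply Quotient.sound
  show pRel f g
  obtain ⟨H⟩ := paths_homotopic hsc (toPath f) ((toPath g).cast h0 h1)
  exact ⟨ContinuousMap.HomotopyRel.cast H (by ext t; rfl) (by ext t; rfl)⟩

/-- For a locally path connected and simply connected `X` (path connected with
every loop null-homotopic), the map `φ : Π₁(X) → X × X`, `[γ] ↦ (γ(1), γ(0))`, is a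
homeomorphism sending composition to the pair-groupoid composition:
`φ([α ⧠ β]) = (α(1), β(0))`. -/
theorem stmt10 {X : Type*} [TopologicalSpace X] [LocallyPathConnectedSpace X]
    [PathConnectedSpace X]
    (hsc : ∀ γ : C(I, X), γ 1 = γ 0 → pRel γ (ContinuousMap.const I (γ 0))) :
    ∃ e : Pi1 X ≃ₜ X × X,
      (∀ γ : C(I, X), e (pq γ) = (γ 1, γ 0)) ∧
      ∀ (α β : C(I, X)) (h : β 1 = α 0), e (pq (concat α β h)) = (α 1, β 0) := by
  classical
  have key : ∀ {f g : C(I, X)}, f 0 = g 0 → f 1 = g 1 → pq f = pq g :=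
    fun h0 h1 => pq_eq_of_endpoints hsc h0 h1
  have hpqc : Continuous (pq : C(I, X) → Pi1 X) := continuous_quot_mk
  set ψ : X × X → Pi1 X :=
    fun z => pq (PathConnectedSpace.somePath z.2 z.1).toContinuousMap with hψ
  have hψcont : Continuous ψ := by
    rw [continuous_def]
    intro W hW
    rw [isOpen_iff_forall_mem_open]
    rintro ⟨x₀, y₀⟩ hz
    have hWo : IsOpen (pq ⁻¹' W) := hW.preimage hpqc
    set γ₀ : C(I, X) := (PathConnectedSpace.somePath y₀ x₀).toContinuousMap with hγ₀
    have h₁ : (ContinuousMap.const I y₀) 1 = γ₀ 0 := by simp [hγ₀]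
    have h₂ : concat γ₀ (ContinuousMap.const I y₀) h₁ 1 = (ContinuousMap.const I x₀) 0 := by
      simp [hγ₀]
    set γ' : C(I, X) := concat (ContinuousMap.const I x₀) (concat γ₀ (ContinuousMap.const I y₀) h₁) h₂
      with hγ'
    have hγ'W : γ' ∈ pq ⁻¹' W := by
      show pq γ' ∈ W
      have he : pq γ' = pq γ₀ := key (by simp [hγ', hγ₀]) (by simp [hγ', hγ₀])
      rw [he]; exact hz
    obtain ⟨B, hBmem, hγ'B, hBW⟩ :=
      (TopologicalSpace.isTopologicalBasis_of_subbasis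
        (ContinuousMap.compactOpen_eq (X := I) (Y := X))).exists_subset_of_mem_open hγ'W hWo
    obtain ⟨S, ⟨hSfin, hSsub⟩, rfl⟩ := hBmem
    have hchoice : ∀ s ∈ S, ∃ KU : Set I × Set X,
        IsCompact KU.1 ∧ IsOpen KU.2 ∧ s = {f : C(I, X) | Set.MapsTo f KU.1 KU.2} := by
      intro s hs
      rcases hSsub hs with ⟨K, hK, U, hU, rfl⟩
      exact ⟨(K, U), hK, hU, rfl⟩
    choose! KU hKc hUo hsEq using hchoice
    have hγ'maps : ∀ s ∈ S, Set.MapsTo γ' (KU s).1 (KU s).2 := by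
      intro s hs
      have h' : γ' ∈ s := hγ'B s hs
      rwa [hsEq s hs] at h'
    set U₀ : Set X := ⋂ s ∈ S, ⋂ (_ : ((KU s).1 ∩ {t : I | 1/2 ≤ (t : ℝ)}).Nonempty), (KU s).2
      with hU₀
    set V₀ : Set X := ⋂ s ∈ S, ⋂ (_ : ((KU s).1 ∩ {t : I | (t : ℝ) ≤ 1/4}).Nonempty), (KU s).2
      with hV₀
    have hU₀o : IsOpen U₀ := hSfin.isOpen_biInter fun s hs => by
      by_cases hne : ((KU s).1 ∩ {t : I | 1/2 ≤ (t : ℝ)}).Nonempty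
      · rw [Set.iInter_eq_if, if_pos hne]; exact hUo s hs
      · rw [Set.iInter_eq_if, if_neg hne]; exact isOpen_univ
    have hV₀o : IsOpen V₀ := hSfin.isOpen_biInter fun s hs => by
      by_cases hne : ((KU s).1 ∩ {t : I | (t : ℝ) ≤ 1/4}).Nonempty
      · rw [Set.iInter_eq_if, if_pos hne]; exact hUo s hs
      · rw [Set.iInter_eq_if, if_neg hne]; exact isOpen_univ
    have hγ'upper : ∀ t : I, 1/2 ≤ (t : ℝ) → γ' t = x₀ := by
      intro t ht
      obtain ⟨u, hu⟩ := concat_upper _ _ h₂ t ht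
      exact hu.symm
    have hγ'lower : ∀ t : I, (t : ℝ) ≤ 1/4 → γ' t = y₀ := by
      intro t ht
      obtain ⟨u, hu⟩ := concat_lower _ _ _ h₁ h₂ t ht
      exact hu.symm
    have hx₀U₀ : x₀ ∈ U₀ := by
      rw [hU₀]
      refine Set.mem_iInter₂.2 fun s hs => Set.mem_iInter.2 fun hne => ?_
      obtain ⟨t, htK, ht⟩ := hne
      have := hγ'maps s hs htK
      rwa [hγ'upper t ht] at this
    have hy₀V₀ : y₀ ∈ V₀ := by
      rw [hV₀]
      refine Set.mem_iInter₂.2 fun s hs => Set.mem_iInter.2 fun hne => ?_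
      obtain ⟨t, htK, ht⟩ := hne
      have := hγ'maps s hs htK
      rwa [hγ'lower t ht] at this
    obtain ⟨U₁, ⟨hU₁o, hx₀U₁, hU₁pc⟩, hU₁sub⟩ :=
      (isOpen_isPathConnected_basis x₀).mem_iff.1 (hU₀o.mem_nhds hx₀U₀)
    obtain ⟨V₁, ⟨hV₁o, hy₀V₁, hV₁pc⟩, hV₁sub⟩ :=
      (isOpen_isPathConnected_basis y₀).mem_iff.1 (hV₀o.mem_nhds hy₀V₀)
    refine ⟨U₁ ×ˢ V₁, ?_, hU₁o.prod hV₁o, ⟨hx₀U₁, hy₀V₁⟩⟩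
    rintro ⟨x, y⟩ ⟨hx, hy⟩
    show ψ (x, y) ∈ W
    have hPj : JoinedIn U₁ x₀ x := hU₁pc.joinedIn x₀ hx₀U₁ x hx
    have hRj : JoinedIn V₁ y y₀ := hV₁pc.joinedIn y hy y₀ hy₀V₁
    set P : Path x₀ x := hPj.somePath with hP
    set R : Path y y₀ := hRj.somePath with hR
    have hR1 : R.toContinuousMap 1 = γ₀ 0 := by simp [hγ₀]
    have hP0 : concat γ₀ R.toContinuousMap hR1 1 = P.toContinuousMap 0 := by simp [hγ₀]
    set g : C(I, X) := concat P.toContinuousMap (concat γ₀ R.toContinuousMap hR1) hP0 with hgdef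
    have hgS : g ∈ ⋂₀ S := by
      intro s hs
      rw [hsEq s hs]
      intro t htK
      rcases le_or_gt (t : ℝ) (1/4) with hc1 | hc1
      · obtain ⟨u, hu⟩ := concat_lower _ _ _ hR1 hP0 t hc1
        rw [hgdef, ← hu]
        have hmem : R u ∈ V₀ := hV₁sub (hRj.somePath_mem u)
        exact Set.mem_iInter.1 (Set.mem_iInter₂.1 hmem s hs) ⟨t, htK, hc1⟩
      rcases le_or_gt (t : ℝ) (1/2) with hc2 | hc2
      · set u : I := ⟨4 * (t : ℝ) - 1, ⟨by linarith, by linarith [t.2.2]⟩⟩ with hudef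
        have e1 := concat_middle P.toContinuousMap γ₀ R.toContinuousMap hR1 hP0 t hc1.le hc2 u rfl
        have e2 := concat_middle (ContinuousMap.const I x₀) γ₀ (ContinuousMap.const I y₀) h₁ h₂ t
          hc1.le hc2 u rfl
        rw [hgdef, e1, ← e2]
        exact hγ'maps s hs htK
      · obtain ⟨u, hu⟩ := concat_upper _ _ hP0 t hc2.le
        rw [hgdef, ← hu]
        have hmem : P u ∈ U₀ := hU₁sub (hPj.somePath_mem u)
        exact Set.mem_iInter.1 (Set.mem_iInter₂.1 hmem s hs) ⟨t, htK, hc2.le⟩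
    have hgW : pq g ∈ W := hBW hgS
    have hψg : ψ (x, y) = pq g := key (by simp [hgdef]) (by simp [hgdef])
    rw [hψg]; exact hgW
  refine ⟨{ toFun := fun a => (rngMap a, srcMap a),
            invFun := ψ,
            left_inv := ?_,
            right_inv := ?_,
            continuous_toFun := ?_,
            continuous_invFun := hψcont }, ?_, ?_⟩
  · intro a
    refine Quotient.inductionOn a fun f => ?_
    exact key (by simp [hψ, srcMap, rngMap, pq]) (by simp [hψ, srcMap, rngMap, pq])
  · rintro ⟨x, y⟩
    simp [hψ, srcMap, rngMap, pq]
  · exact ((continuous_eval_const (1 : I)).quotient_lift _).prodMk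
      ((continuous_eval_const (0 : I)).quotient_lift _)
  · intro γ
    rfl
  · intro α β h
    show ((concat α β h) 1, (concat α β h) 0) = (α 1, β 0)
    rw [concat_one, concat_zero]

end
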